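/- For fixed η > 0, the function p ↦ (√p·a/√η − 1)² + p·b/η on [0, P], where a > 0 and b ≥ 0, attains its minimum at p* = min(P, a²η/(a²+b)²). -/

import Mathlib

/-- For fixed `η > 0`, the function `p ↦ (√p·a/√η − 1)² + p·b/η` on `[0, P]`,
where `a > 0` and `b ≥ 0`, attains its minimum at `p* = min(P, a²η/(a²+b)²)`. -/
theorem stmt_0 (a b P η : ℝ) (ha : 0 < a) (hb : 0 ≤ b) (hP : 0 < P) (hη : 0 < η) :
    min P (a ^ 2 * η / (a ^ 2 + b) ^ 2) ∈ Set.Icc 0 P ∧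
    ∀ p ∈ Set.Icc (0 : ℝ) P,
      (Real.sqrt (min P (a ^ 2 * η / (a ^ 2 + b) ^ 2)) * a / Real.sqrt η - 1) ^ 2
        + min P (a ^ 2 * η / (a ^ 2 + b) ^ 2) * b / η
      ≤ (Real.sqrt p * a / Real.sqrt η - 1) ^ 2 + p * b / η := by
  have hab : 0 < a ^ 2 + b := by positivity
  have hq0 : 0 ≤ a ^ 2 * η / (a ^ 2 + b) ^ 2 := by positivity
  have he : 0 < Real.sqrt η := Real.sqrt_pos.mpr hη
  have he2 : Real.sqrt η ^ 2 = η := Real.sq_sqrt hη.le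
  constructor
  · exact ⟨le_min hP.le hq0, min_le_left _ _⟩
  · intro p hp
    obtain ⟨hp0, hpP⟩ := hp
    set e := Real.sqrt η with hedef
    set s := Real.sqrt p with hsdef
    have hs0 : 0 ≤ s := Real.sqrt_nonneg p
    have hs2 : s ^ 2 = p := Real.sq_sqrt hp0
    -- key reduction: multiply out by η = e²
    have key : ∀ q : ℝ, 0 ≤ q →
        (Real.sqrt q * (a ^ 2 + b) - a * e) * (Real.sqrt q * (a ^ 2 + b) - a * e)
          ≤ (s * (a ^ 2 + b) - a * e) * (s * (a ^ 2 + b) - a * e) →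
        (Real.sqrt q * a / e - 1) ^ 2 + q * b / η
          ≤ (s * a / e - 1) ^ 2 + p * b / η := by
      intro q hq h
      set u := Real.sqrt q with hudef
      have hu2 : u ^ 2 = q := Real.sq_sqrt hq
      rw [← sub_nonneg]
      have hrw : (s * a / e - 1) ^ 2 + p * b / η - ((u * a / e - 1) ^ 2 + q * b / η)
          = ((s * (a ^ 2 + b) - a * e) * (s * (a ^ 2 + b) - a * e)
              - (u * (a ^ 2 + b) - a * e) * (u * (a ^ 2 + b) - a * e))
            / ((a ^ 2 + b) * η) := by
        rw [← hs2, ← hu2, ← he2]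
        field_simp
        ring
      rw [hrw]
      apply div_nonneg (by linarith) (by positivity)
    rcases le_total P (a ^ 2 * η / (a ^ 2 + b) ^ 2) with hle | hle
    · rw [min_eq_left hle]
      apply key P hP.le
      set u := Real.sqrt P with hudef
      have hu0 : 0 ≤ u := Real.sqrt_nonneg P
      have hu2 : u ^ 2 = P := Real.sq_sqrt hP.le
      have hsu : s ≤ u := Real.sqrt_le_sqrt hpP
      -- u ≤ a e / (a²+b)
      have hub : u * (a ^ 2 + b) ≤ a * e := by
        have h1 : u ^ 2 * (a ^ 2 + b) ^ 2 ≤ a ^ 2 * η := by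
          rw [hu2]
          calc P * (a ^ 2 + b) ^ 2 ≤ (a ^ 2 * η / (a ^ 2 + b) ^ 2) * (a ^ 2 + b) ^ 2 := by
                apply mul_le_mul_of_nonneg_right hle (by positivity)
            _ = a ^ 2 * η := by field_simp
        have hx2 : (u * (a ^ 2 + b)) ^ 2 ≤ (a * e) ^ 2 := by nlinarith [h1, he2]
        have h3 := Real.sqrt_le_sqrt hx2
        rwa [Real.sqrt_sq (by positivity), Real.sqrt_sq (by positivity)] at h3
      nlinarith [mul_nonneg (sub_nonneg.mpr hsu) hab.le, hub, hs0, hu0]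
    · rw [min_eq_right hle]
      apply key _ hq0
      have hu : Real.sqrt (a ^ 2 * η / (a ^ 2 + b) ^ 2) = a * e / (a ^ 2 + b) := by
        rw [show a ^ 2 * η / (a ^ 2 + b) ^ 2 = (a * e / (a ^ 2 + b)) ^ 2 by
          rw [div_pow, mul_pow, he2]]
        exact Real.sqrt_sq (by positivity)
      rw [hu]
      have : a * e / (a ^ 2 + b) * (a ^ 2 + b) - a * e = 0 := by field_simp; ring
      rw [this]
      nlinarith [sq_nonneg (s * (a ^ 2 + b) - a * e)]
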